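/- The infinite sum S_∞ = Σ_{j=1}^{∞} 1/x_j equals the value of the infinite continued fraction [a_0; a_1, a_2, …], i.e., the sequence of convergents p_m/q_m converges to S_∞ as m → ∞. -/

import Mathlib

open Filter

/-- the infinite sum `S_∞ = ∑_{j=1}^∞ 1 / x j` equals the value of the
infinite continued fraction `[a 0; a 1, a 2, …]`, i.e. the sequence of convergents
`p_m / q_m` converges to `S_∞` as `m → ∞`.  Here `p`, `q` are indexed with a shift, so that
`p (m+1) / q (m+1)` is the `m`-th convergent, with `p 0 = p_{-1} = 1` and `q 0 = q_{-1} = 0`. -/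
theorem stmt_5 (F : Polynomial ℤ)
    (hFnonneg : ∀ i, 0 ≤ F.coeff i) (hF0 : F.coeff 0 = 1) (hFdeg : 1 ≤ F.natDegree)
    (x : ℕ → ℚ) (hxpos : ∀ n, 0 < x n) (hx0 : x 0 = 1) (hx1 : x 1 = 1)
    (hrec : ∀ n, x (n + 2) * x n = (x (n + 1)) ^ 2 * Polynomial.aeval (x (n + 1)) F)
    (a : ℕ → ℚ)
    (haeven : ∀ n, a (2 * n) = x n)
    (haodd : ∀ n, a (2 * n + 1) = (Polynomial.aeval (x (n + 1)) F - 1) / x n)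
    (p q : ℕ → ℚ)
    (hp0 : p 0 = 1) (hp1 : p 1 = a 0) (hq0 : q 0 = 0) (hq1 : q 1 = 1)
    (hp : ∀ n, p (n + 2) = a (n + 1) * p (n + 1) + p n)
    (hq : ∀ n, q (n + 2) = a (n + 1) * q (n + 1) + q n) :
    Tendsto (fun m : ℕ => ((p (m + 1) : ℝ) / (q (m + 1) : ℝ)))
      atTop (nhds (∑' j : ℕ, (1 : ℝ) / (x (j + 1) : ℝ))) := by
  have hxne : ∀ n, x n ≠ 0 := fun n => (hxpos n).ne'
  -- lower bounds on values of F
  have hF1 : ∀ t : ℚ, 0 ≤ t → 1 ≤ Polynomial.aeval t F := by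
    intro t ht
    rw [Polynomial.aeval_eq_sum_range]
    calc (1:ℚ) = F.coeff 0 • t ^ 0 := by rw [hF0]; norm_num
    _ ≤ ∑ i ∈ Finset.range (F.natDegree + 1), F.coeff i • t ^ i := by
        refine Finset.single_le_sum (f := fun i => F.coeff i • t ^ i) (fun i _ => ?_)
          (Finset.mem_range.mpr (by omega))
        show (0:ℚ) ≤ F.coeff i • t ^ i
        rw [zsmul_eq_mul]
        have h1 : (0:ℚ) ≤ (F.coeff i : ℚ) := by exact_mod_cast hFnonneg i
        exact mul_nonneg h1 (pow_nonneg ht i)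
  have hF2 : ∀ t : ℚ, 1 ≤ t → 1 + t ≤ Polynomial.aeval t F := by
    intro t ht
    have ht0 : (0:ℚ) ≤ t := by linarith
    rw [Polynomial.aeval_eq_sum_range]
    have hFne : F ≠ 0 := by
      intro h; rw [h] at hFdeg; simp at hFdeg
    have hcd : 1 ≤ F.coeff F.natDegree := by
      have h1 : F.coeff F.natDegree ≠ 0 := Polynomial.leadingCoeff_ne_zero.mpr hFne
      have h2 := hFnonneg F.natDegree
      omega
    have hsub : ({0, F.natDegree} : Finset ℕ) ⊆ Finset.range (F.natDegree + 1) := by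
      intro i hi
      simp only [Finset.mem_insert, Finset.mem_singleton] at hi
      rcases hi with h | h <;> simp [h]
    have hle := Finset.sum_le_sum_of_subset_of_nonneg
      (f := fun i => F.coeff i • t ^ i) hsub
      (fun i _ _ => by
        show (0:ℚ) ≤ F.coeff i • t ^ i
        rw [zsmul_eq_mul]
        have h1 : (0:ℚ) ≤ (F.coeff i : ℚ) := by exact_mod_cast hFnonneg i
        exact mul_nonneg h1 (pow_nonneg ht0 i))
    refine le_trans ?_ hle
    rw [Finset.sum_pair (by omega : (0:ℕ) ≠ F.natDegree)]
    have hcd' : (1:ℚ) ≤ (F.coeff F.natDegree : ℚ) := by exact_mod_cast hcd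
    have hpow : t ≤ t ^ F.natDegree := by
      calc t = t ^ 1 := (pow_one t).symm
      _ ≤ t ^ F.natDegree := pow_le_pow_right₀ ht hFdeg
    have h1 : F.coeff 0 • t ^ 0 = (1:ℚ) := by simp [hF0]
    have h2 : F.coeff F.natDegree • t ^ F.natDegree
        = (F.coeff F.natDegree : ℚ) * t ^ F.natDegree := zsmul_eq_mul _ _
    rw [h1, h2]
    nlinarith
  -- monotonicity and growth of x
  have hmono : ∀ n, 1 ≤ x n ∧ x n ≤ x (n + 1) := by
    intro n
    induction n with
    | zero => exact ⟨by rw [hx0], by rw [hx0, hx1]⟩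
    | succ n ih =>
      obtain ⟨h1, h2⟩ := ih
      have h1' : 1 ≤ x (n + 1) := le_trans h1 h2
      refine ⟨h1', ?_⟩
      have hF := hF1 (x (n + 1)) (by linarith)
      have hr := hrec n
      nlinarith [hxpos n, hxpos (n + 1), hxpos (n + 2)]
  have hdouble : ∀ n, 2 * x (n + 1) ≤ x (n + 2) := by
    intro n
    obtain ⟨h1, h2⟩ := hmono n
    have h1' : 1 ≤ x (n + 1) := le_trans h1 h2
    have hF := hF2 (x (n + 1)) h1'
    have hr := hrec n
    nlinarith [hxpos n, hxpos (n + 1), hxpos (n + 2)]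
  have hxgrow : ∀ n, (2:ℚ) ^ n ≤ x (n + 1) := by
    intro n
    induction n with
    | zero => rw [hx1]; norm_num
    | succ n ih =>
      have h := hdouble n
      calc (2:ℚ) ^ (n + 1) = 2 * 2 ^ n := by ring
      _ ≤ 2 * x (n + 1) := by linarith
      _ ≤ x (n + 2) := h
  -- partial sums
  set S : ℕ → ℚ := fun k => ∑ j ∈ Finset.range k, 1 / x (j + 1) with hSdef
  have hS : ∀ k, S (k + 1) = S k + 1 / x (k + 1) := fun k => Finset.sum_range_succ _ k
  -- closed forms for p and q
  have key : ∀ n, q (2 * n + 1) = x (n + 1) ∧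
      q (2 * n + 2) * x (n + 1) = x (n + 2) - x (n + 1) ∧
      p (2 * n + 1) = x (n + 1) * S (n + 1) ∧
      p (2 * n + 2) * x (n + 1) = (x (n + 2) - x (n + 1)) * S (n + 1) + 1 := by
    intro n
    induction n with
    | zero =>
      have ha0 : a 0 = x 0 := haeven 0
      have ha1 : a 1 = (Polynomial.aeval (x 1) F - 1) / x 0 := haodd 0
      have hr0 : x 2 = Polynomial.aeval 1 F := by
        have h := hrec 0
        norm_num [hx0, hx1] at h
        exact h
      have hS1 : S 1 = 1 := by simp [hSdef, Finset.sum_range_one, hx1]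
      have hq2 : q 2 = a 1 * q 1 + q 0 := hq 0
      have hp2 : p 2 = a 1 * p 1 + p 0 := hp 0
      rw [hx0, hx1] at ha1
      simp only [div_one] at ha1
      refine ⟨by rw [hq1, hx1], ?_, ?_, ?_⟩
      · rw [hq2, hq1, hq0, ha1, hx1, hr0]; ring
      · rw [hp1, ha0, hx0, hx1, hS1]; norm_num
      · rw [hp2, hp1, ha0, hp0, ha1, hx0, hx1, hS1, hr0]; ring
    | succ n ih =>
      obtain ⟨hA, hB, hC, hD⟩ := ih
      have hae : a (2 * n + 2) = x (n + 1) := by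
        have h := haeven (n + 1); rwa [show 2 * (n + 1) = 2 * n + 2 by ring] at h
      have hao : a (2 * n + 3) = (Polynomial.aeval (x (n + 2)) F - 1) / x (n + 1) := by
        have h := haodd (n + 1)
        rwa [show 2 * (n + 1) + 1 = 2 * n + 3 by ring, show n + 1 + 1 = n + 2 by omega] at h
      have hrv : x (n + 3) * x (n + 1) = x (n + 2) ^ 2 * Polynomial.aeval (x (n + 2)) F := by
        have h := hrec (n + 1)
        rwa [show n + 1 + 2 = n + 3 by omega, show n + 1 + 1 = n + 2 by omega] at h
      have hSn : S (n + 2) = S (n + 1) + 1 / x (n + 2) := by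
        have h := hS (n + 1); rwa [show n + 1 + 1 = n + 2 by omega] at h
      have hSn' : S (n + 2) * x (n + 2) = S (n + 1) * x (n + 2) + 1 := by
        rw [hSn, add_mul, one_div, inv_mul_cancel₀ (hxne (n + 2))]
      have hq3 : q (2 * n + 3) = a (2 * n + 2) * q (2 * n + 2) + q (2 * n + 1) := hq (2 * n + 1)
      have hq4 : q (2 * n + 4) = a (2 * n + 3) * q (2 * n + 3) + q (2 * n + 2) := hq (2 * n + 2)
      have hp3 : p (2 * n + 3) = a (2 * n + 2) * p (2 * n + 2) + p (2 * n + 1) := hp (2 * n + 1)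
      have hp4 : p (2 * n + 4) = a (2 * n + 3) * p (2 * n + 3) + p (2 * n + 2) := hp (2 * n + 2)
      have e1 : 2 * (n + 1) + 1 = 2 * n + 3 := by ring
      have e2 : 2 * (n + 1) + 2 = 2 * n + 4 := by ring
      rw [e1, e2, show n + 1 + 1 = n + 2 by omega, show n + 1 + 2 = n + 3 by omega]
      have hG1 : q (2 * n + 3) = x (n + 2) := by
        rw [hq3, hae, hA]; linear_combination hB
      have hD' : x (n + 1) * p (2 * n + 2) = (x (n + 2) - x (n + 1)) * S (n + 1) + 1 := by
        linear_combination hD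
      have hG3 : p (2 * n + 3) = x (n + 2) * S (n + 2) := by
        rw [hp3, hae, hC, hSn, hD', mul_add, mul_one_div, div_self (hxne (n + 2))]
        ring
      have hq4' : q (2 * n + 4) * x (n + 1)
          = (Polynomial.aeval (x (n + 2)) F - 1) * x (n + 2) + q (2 * n + 2) * x (n + 1) := by
        rw [hq4, hao, hG1]; field_simp [hxne (n + 1)]; try ring
      have hp4' : p (2 * n + 4) * x (n + 1)
          = (Polynomial.aeval (x (n + 2)) F - 1) * x (n + 2) * S (n + 2)
            + p (2 * n + 2) * x (n + 1) := by
        rw [hp4, hao, hG3]; field_simp [hxne (n + 1)]; try ring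
      refine ⟨hG1, ?_, hG3, ?_⟩
      · apply mul_right_cancel₀ (hxne (n + 1))
        linear_combination x (n + 2) * hq4' + x (n + 2) * hB - hrv
      · apply mul_right_cancel₀ (hxne (n + 1))
        linear_combination x (n + 2) * hp4' + x (n + 2) * hD - S (n + 2) * hrv
          + (x (n + 1) - x (n + 2)) * hSn'
  -- convergent values
  have hconv1 : ∀ n, p (2 * n + 1) / q (2 * n + 1) = S (n + 1) := by
    intro n
    obtain ⟨hA, _, hC, _⟩ := key n
    rw [hA, hC]
    exact mul_div_cancel_left₀ _ (hxne (n + 1))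
  have hdiffpos : ∀ n, (0:ℚ) < x (n + 2) - x (n + 1) := by
    intro n
    have h1 := hdouble n
    have h2 := hxpos (n + 1)
    linarith
  have hconv2 : ∀ n, p (2 * n + 2) / q (2 * n + 2)
      = S (n + 1) + 1 / (x (n + 2) - x (n + 1)) := by
    intro n
    obtain ⟨_, hB, _, hD⟩ := key n
    have hdp := hdiffpos n
    have hne1 := hxne (n + 1)
    have hne2 : x (n + 2) - x (n + 1) ≠ 0 := hdp.ne'
    have hq2 : q (2 * n + 2) = (x (n + 2) - x (n + 1)) / x (n + 1) := by
      field_simp [hne1]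
      linear_combination hB
    have hp2 : p (2 * n + 2) = ((x (n + 2) - x (n + 1)) * S (n + 1) + 1) / x (n + 1) := by
      field_simp [hne1]
      linear_combination hD
    rw [hp2, hq2]
    rw [div_div_div_cancel_right₀ hne1]
    field_simp [hne2]
  -- pass to the reals
  set L : ℝ := ∑' j : ℕ, (1 : ℝ) / (x (j + 1) : ℝ) with hLdef
  set SR : ℕ → ℝ := fun k => ∑ j ∈ Finset.range k, (1 : ℝ) / (x (j + 1) : ℝ) with hSRdef
  have hcast : ∀ k, ((S k : ℚ) : ℝ) = SR k := by
    intro k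
    rw [hSdef, hSRdef]
    push_cast
    rfl
  have hsum : Summable (fun j : ℕ => (1 : ℝ) / (x (j + 1) : ℝ)) := by
    apply Summable.of_nonneg_of_le (f := fun j => (1/2 : ℝ) ^ j)
      (fun j => div_nonneg zero_le_one (by exact_mod_cast (hxpos (j + 1)).le))
      ?_ summable_geometric_two
    intro j
    have h1 : (2:ℝ) ^ j ≤ ((x (j + 1) : ℚ) : ℝ) := by exact_mod_cast hxgrow j
    calc (1:ℝ) / (x (j + 1) : ℝ) ≤ 1 / 2 ^ j :=
      one_div_le_one_div_of_le (by positivity) h1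
    _ = (1/2 : ℝ) ^ j := by rw [one_div_pow]
  have hps : Tendsto (fun k : ℕ => ∑ j ∈ Finset.range k, (1 : ℝ) / (x (j + 1) : ℝ))
      atTop (nhds L) := hsum.hasSum.tendsto_sum_nat
  have hhalf : Tendsto (fun m : ℕ => m / 2 + 1) atTop atTop :=
    tendsto_atTop_atTop.mpr (fun b => ⟨2 * b, fun m hm => by omega⟩)
  have hgcomp : Tendsto (fun m : ℕ => SR (m / 2 + 1)) atTop (nhds L) := by
    simpa [Function.comp_def, hSRdef] using hps.comp hhalf
  -- values of the convergents in ℝ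
  have hfe : ∀ n, (p (2 * n + 1) : ℝ) / (q (2 * n + 1) : ℝ) = SR (n + 1) := by
    intro n
    calc (p (2 * n + 1) : ℝ) / (q (2 * n + 1) : ℝ)
        = ((p (2 * n + 1) / q (2 * n + 1) : ℚ) : ℝ) := by push_cast; ring
    _ = ((S (n + 1) : ℚ) : ℝ) := by rw [hconv1 n]
    _ = SR (n + 1) := hcast (n + 1)
  have hfo : ∀ n, (p (2 * n + 2) : ℝ) / (q (2 * n + 2) : ℝ)
      = SR (n + 1) + 1 / ((x (n + 2) : ℝ) - (x (n + 1) : ℝ)) := by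
    intro n
    calc (p (2 * n + 2) : ℝ) / (q (2 * n + 2) : ℝ)
        = ((p (2 * n + 2) / q (2 * n + 2) : ℚ) : ℝ) := by push_cast; ring
    _ = ((S (n + 1) + 1 / (x (n + 2) - x (n + 1)) : ℚ) : ℝ) := by rw [hconv2 n]
    _ = SR (n + 1) + 1 / ((x (n + 2) : ℝ) - (x (n + 1) : ℝ)) := by
        push_cast
        rw [hcast (n + 1)]
  -- squeeze the error term
  have herr : ∀ m : ℕ, 0 ≤ (p (m + 1) : ℝ) / (q (m + 1) : ℝ) - SR (m / 2 + 1) ∧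
      (p (m + 1) : ℝ) / (q (m + 1) : ℝ) - SR (m / 2 + 1) ≤ (1/2 : ℝ) ^ (m / 2) := by
    intro m
    rcases Nat.even_or_odd m with ⟨n, hn⟩ | ⟨n, hn⟩
    · subst hn
      have he : (n + n) / 2 = n := by omega
      rw [he, show n + n + 1 = 2 * n + 1 by ring, hfe n]
      constructor
      · simp
      · simp only [sub_self]
        positivity
    · subst hn
      have he : (2 * n + 1) / 2 = n := by omega
      rw [he, show 2 * n + 1 + 1 = 2 * n + 2 by ring, hfo n]
      have hd : (0:ℝ) < (x (n + 2) : ℝ) - (x (n + 1) : ℝ) := by exact_mod_cast hdiffpos n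
      have hxg : (2:ℝ) ^ n ≤ ((x (n + 1) : ℚ) : ℝ) := by exact_mod_cast hxgrow n
      have hxd : ((x (n + 1) : ℚ) : ℝ) ≤ (x (n + 2) : ℝ) - (x (n + 1) : ℝ) := by
        have h1 := hdouble n
        have h2 : (2:ℝ) * ((x (n + 1) : ℚ) : ℝ) ≤ ((x (n + 2) : ℚ) : ℝ) := by exact_mod_cast h1
        linarith
      have h2n : (2:ℝ) ^ n ≤ (x (n + 2) : ℝ) - (x (n + 1) : ℝ) := le_trans hxg hxd
      constructor
      · have h3 : (0:ℝ) ≤ 1 / ((x (n + 2) : ℝ) - (x (n + 1) : ℝ)) := by positivity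
        linarith
      · have h3 : 1 / ((x (n + 2) : ℝ) - (x (n + 1) : ℝ)) ≤ 1 / 2 ^ n :=
          one_div_le_one_div_of_le (by positivity) h2n
        calc SR (n + 1) + 1 / ((x (n + 2) : ℝ) - (x (n + 1) : ℝ)) - SR (n + 1)
            = 1 / ((x (n + 2) : ℝ) - (x (n + 1) : ℝ)) := by ring
        _ ≤ 1 / 2 ^ n := h3
        _ = (1/2 : ℝ) ^ n := by rw [one_div_pow]
  have htend_err : Tendsto
      (fun m : ℕ => (p (m + 1) : ℝ) / (q (m + 1) : ℝ) - SR (m / 2 + 1)) atTop (nhds 0) := by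
    apply squeeze_zero (fun m => (herr m).1) (fun m => (herr m).2)
    have h12 : Tendsto (fun k : ℕ => (1/2 : ℝ) ^ k) atTop (nhds 0) :=
      tendsto_pow_atTop_nhds_zero_of_lt_one (by norm_num) (by norm_num)
    have hh : Tendsto (fun m : ℕ => m / 2) atTop atTop :=
      tendsto_atTop_atTop.mpr (fun b => ⟨2 * b, fun m hm => by omega⟩)
    exact h12.comp hh
  have hfinal := hgcomp.add htend_err
  rw [add_zero] at hfinal
  exact hfinal.congr (fun m => by ring)
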